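/- Let h : ℝⁿ → ℝ ∪ {∞} be a proper polyhedral convex function, s ∈ dom h with C := ∂h(s) ≠ ∅. Then there exists a neighborhood V of s such that for all x ∈ V, the directional derivative satisfies h'(s; x − s) = σ_C(x − s) and moreover ∂h(x) = ∂σ_C(x − s) = {v ∈ C : ⟨v, x−s⟩ = σ_C(x−s)} whenever x ∈ V ∩ dom h. -/

import Mathlib

open scoped RealInnerProductSpace Topology
open Filter

/-- Convex subdifferential of an extended-real-valued function. -/
noncomputable def ESub {n : ℕ} (g : EuclideanSpace ℝ (Fin n) → EReal)
    (x : EuclideanSpace ℝ (Fin n)) : Set (EuclideanSpace ℝ (Fin n)) :=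
  {v | ∀ z, g x + ((⟪v, z - x⟫ : ℝ) : EReal) ≤ g z}

def EProper {n : ℕ} (g : EuclideanSpace ℝ (Fin n) → EReal) : Prop :=
  (∃ x, g x ≠ ⊤) ∧ ∀ x, g x ≠ ⊥

/-- A function is polyhedral iff its epigraph is an intersection of finitely many
closed halfspaces of `ℝⁿ × ℝ`. -/
def IsPolyhedralFn {n : ℕ} (g : EuclideanSpace ℝ (Fin n) → EReal) : Prop :=
  ∃ (m : ℕ) (a : Fin m → EuclideanSpace ℝ (Fin n)) (r b : Fin m → ℝ),
    {p : EuclideanSpace ℝ (Fin n) × ℝ | g p.1 ≤ (p.2 : EReal)} =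
      {p : EuclideanSpace ℝ (Fin n) × ℝ | ∀ i, ⟪a i, p.1⟫ + r i * p.2 ≤ b i}

/-- Support function of a set, with values in `EReal`. -/
noncomputable def ESupport {n : ℕ} (C : Set (EuclideanSpace ℝ (Fin n)))
    (d : EuclideanSpace ℝ (Fin n)) : EReal :=
  sSup ((fun v => ((⟪v, d⟫ : ℝ) : EReal)) '' C)

-- auxiliary sup' lemmas
lemma sup'_const_add {ι : Type*} (s : Finset ι) (hs : s.Nonempty) (c : ℝ) (g : ι → ℝ) :
    s.sup' hs (fun i => c + g i) = c + s.sup' hs g := by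
  apply le_antisymm
  · exact Finset.sup'_le _ _ fun i hi => by
      have := Finset.le_sup' g hi; linarith
  · obtain ⟨i, hi, hieq⟩ := Finset.exists_mem_eq_sup' hs g
    rw [hieq]
    exact Finset.le_sup' (fun i => c + g i) hi

lemma sup'_const_mul {ι : Type*} (s : Finset ι) (hs : s.Nonempty) {c : ℝ} (hc : 0 ≤ c)
    (g : ι → ℝ) : s.sup' hs (fun i => c * g i) = c * s.sup' hs g := by
  apply le_antisymm
  · exact Finset.sup'_le _ _ fun i hi => by
      have := Finset.le_sup' g hi; nlinarith
  · obtain ⟨i, hi, hieq⟩ := Finset.exists_mem_eq_sup' hs g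
    rw [hieq]
    exact Finset.le_sup' (fun i => c * g i) hi

lemma convex_lt' {u v u' v' t : ℝ} (h1 : u < u') (h2 : v < v') (ht0 : 0 ≤ t) (ht1 : t ≤ 1) :
    u + t * (v - u) < u' + t * (v' - u') := by
  rcases eq_or_lt_of_le ht0 with he | hp
  · rw [← he]; simpa using h1
  · nlinarith
lemma convex_le' {u v w t : ℝ} (h1 : u ≤ w) (h2 : v ≤ w) (ht0 : 0 ≤ t) (ht1 : t ≤ 1) :
    u + t * (v - u) ≤ w := by nlinarith

set_option maxHeartbeats 1000000 in
/-- local representation of a proper polyhedral function: near `s ∈ dom h`,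
the directional derivative `h'(s; x − s)` equals `σ_C(x − s)` where `C = ∂h(s)`, and for
`x ∈ V ∩ dom h` the subdifferential `∂h(x)` is the argmax set `∂σ_C(x−s)`. -/
theorem stmt11 {n : ℕ} (h : EuclideanSpace ℝ (Fin n) → EReal)
    (hproper : EProper h) (hpoly : IsPolyhedralFn h)
    (s : EuclideanSpace ℝ (Fin n)) (hs : h s ≠ ⊤)
    (C : Set (EuclideanSpace ℝ (Fin n))) (hC : C = ESub h s) (hCne : C.Nonempty) :
    ∃ V ∈ 𝓝 s,
      (∀ x ∈ V,
        Tendsto (fun t : ℝ => (h (s + t • (x - s)) - h s) * ((t⁻¹ : ℝ) : EReal))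
          (𝓝[>] (0 : ℝ)) (𝓝 (ESupport C (x - s)))) ∧
      (∀ x ∈ V, h x ≠ ⊤ →
        ESub h x = {v | v ∈ C ∧ ∀ u ∈ C, ⟪u, x - s⟫ ≤ ⟪v, x - s⟫}) := by
  obtain ⟨m, a, r, b, hepi⟩ := hpoly
  obtain ⟨-, hnbot⟩ := hproper
  have key : ∀ (x : EuclideanSpace ℝ (Fin n)) (t : ℝ),
      h x ≤ (t : EReal) ↔ ∀ i, ⟪a i, x⟫ + r i * t ≤ b i := by
    intro x t
    have := Set.ext_iff.mp hepi (x, t)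
    simpa using this
  have hsreal : h s = (((h s).toReal : ℝ) : EReal) := (EReal.coe_toReal hs (hnbot s)).symm
  set s0 : ℝ := (h s).toReal with hs0
  have hs_le : ∀ t : ℝ, s0 ≤ t → ∀ i, ⟪a i, s⟫ + r i * t ≤ b i := by
    intro t ht i
    exact (key s t).mp (by rw [hsreal]; exact_mod_cast ht) i
  have hrle : ∀ i, r i ≤ 0 := by
    intro i
    by_contra hri
    push_neg at hri
    set t : ℝ := max s0 ((b i - ⟪a i, s⟫ + 1) / r i) with ht
    have h1 := hs_le t (le_max_left _ _) i
    have h2 : (b i - ⟪a i, s⟫ + 1) / r i ≤ t := le_max_right _ _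
    have h3 : b i - ⟪a i, s⟫ + 1 ≤ r i * t := by
      rw [div_le_iff₀ hri] at h2; linarith
    linarith
  classical
  set J : Finset (Fin m) := Finset.univ.filter (fun i => r i < 0) with hJ
  have hJmem : ∀ i, i ∈ J ↔ r i < 0 := by intro i; simp [hJ]
  have hJne : J.Nonempty := by
    by_contra hJe
    rw [Finset.not_nonempty_iff_eq_empty] at hJe
    have hr0 : ∀ i, r i = 0 := by
      intro i
      rcases lt_or_eq_of_le (hrle i) with hlt | he
      · have hmem : i ∈ J := (hJmem i).mpr hlt
        rw [hJe] at hmem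
        simp at hmem
      · exact he
    have : ∀ t : ℝ, h s ≤ (t : EReal) := by
      intro t
      rw [key]
      intro i
      have := hs_le s0 le_rfl i
      simp only [hr0 i] at this ⊢
      linarith
    have h1 := this (s0 - 1)
    rw [hsreal] at h1
    exact absurd (EReal.coe_le_coe_iff.mp h1) (by linarith)
  set L : Fin m → EuclideanSpace ℝ (Fin n) → ℝ := fun i x => (⟪a i, x⟫ - b i) / (-r i) with hL
  set P : EuclideanSpace ℝ (Fin n) → Prop := fun x => ∀ i, r i = 0 → ⟪a i, x⟫ ≤ b i with hP
  set f : EuclideanSpace ℝ (Fin n) → ℝ := fun x => J.sup' hJne (fun i => L i x) with hf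
  have keyB : ∀ (x : EuclideanSpace ℝ (Fin n)) (t : ℝ),
      h x ≤ (t : EReal) ↔ (P x ∧ f x ≤ t) := by
    intro x t
    rw [key]
    constructor
    · intro hall
      refine ⟨fun i hi => by have := hall i; rw [hi] at this; linarith, ?_⟩
      apply Finset.sup'_le
      intro i hi
      have hri : r i < 0 := (hJmem i).mp hi
      have := hall i
      rw [hL, div_le_iff₀ (by linarith : (0:ℝ) < -r i)]
      nlinarith
    · rintro ⟨hPx, hfx⟩ i
      rcases lt_or_eq_of_le (hrle i) with hlt | he
      · have hi : i ∈ J := (hJmem i).mpr hlt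
        have := (Finset.le_sup' (fun i => L i x) hi).trans hfx
        rw [hL, div_le_iff₀ (by linarith : (0:ℝ) < -r i)] at this
        nlinarith
      · have := hPx i he
        rw [he, zero_mul, add_zero]
        exact this
  have hrep : ∀ x, h x = if P x then ((f x : ℝ) : EReal) else ⊤ := by
    intro x
    by_cases hPx : P x
    · rw [if_pos hPx]
      have h1 : h x ≤ ((f x : ℝ) : EReal) := (keyB x (f x)).mpr ⟨hPx, le_rfl⟩
      have hxtop : h x ≠ ⊤ := fun he => by rw [he] at h1; exact absurd h1 (by simp)
      have hxr : h x = (((h x).toReal : ℝ) : EReal) := (EReal.coe_toReal hxtop (hnbot x)).symm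
      have h2 : f x ≤ (h x).toReal := ((keyB x _).mp (le_of_eq hxr)).2
      rw [hxr]
      exact le_antisymm (by rw [hxr] at h1; exact_mod_cast h1) (by exact_mod_cast h2)
    · rw [if_neg hPx]
      by_contra hxtop
      have hxr : h x = (((h x).toReal : ℝ) : EReal) := (EReal.coe_toReal hxtop (hnbot x)).symm
      exact hPx ((keyB x _).mp (le_of_eq hxr)).1
  have hPs : P s := by
    by_contra hPs
    rw [hrep s, if_neg hPs] at hs
    exact hs rfl
  have hsval : h s = ((f s : ℝ) : EReal) := by rw [hrep s, if_pos hPs]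
  set c : Fin m → EuclideanSpace ℝ (Fin n) := fun i => (-r i)⁻¹ • a i with hc
  have linn : ∀ i, r i < 0 → ∀ x y, L i x = L i y + ⟪c i, x - y⟫ := by
    intro i hri x y
    have hne : (-r i) ≠ 0 := by linarith
    have e1 : (⟪c i, x - y⟫:ℝ) = (-r i)⁻¹ * (⟪a i, x⟫ - ⟪a i, y⟫) := by
      rw [hc, real_inner_smul_left, inner_sub_right]
    simp only [hL]
    rw [e1, div_eq_mul_inv, div_eq_mul_inv]
    ring
  set A : Finset (Fin m) := J.filter (fun i => L i s = f s) with hA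
  have hAJ : ∀ i ∈ A, r i < 0 := fun i hi => (hJmem i).mp (Finset.mem_filter.mp hi).1
  have hAJ' : ∀ i ∈ A, i ∈ J := fun i hi => (Finset.mem_filter.mp hi).1
  have hAval : ∀ i ∈ A, L i s = f s := fun i hi => (Finset.mem_filter.mp hi).2
  have hAne : A.Nonempty := by
    obtain ⟨i, hi, hieq⟩ := Finset.exists_mem_eq_sup' hJne (fun i => L i s)
    exact ⟨i, Finset.mem_filter.mpr ⟨hi, hieq.symm⟩⟩
  have cmem : ∀ i ∈ A, c i ∈ C := by
    intro i hi
    rw [hC]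
    intro z
    rw [hsval, hrep z]
    by_cases hPz : P z
    · rw [if_pos hPz, ← EReal.coe_add, EReal.coe_le_coe_iff]
      have h1 : L i z ≤ f z := Finset.le_sup' (fun j => L j z) (hAJ' i hi)
      have h2 : L i z = L i s + ⟪c i, z - s⟫ := linn i (hAJ i hi) z s
      have h3 := hAval i hi
      linarith
    · rw [if_neg hPz]; exact le_top
  have amem : ∀ i0 ∈ A, ∀ i, r i = 0 → ⟪a i, s⟫ = b i →
      ∀ μ : ℝ, 0 ≤ μ → c i0 + μ • a i ∈ C := by
    intro i0 hi0 i hri hai μ hμ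
    rw [hC]
    intro z
    rw [hsval, hrep z]
    by_cases hPz : P z
    · rw [if_pos hPz, ← EReal.coe_add, EReal.coe_le_coe_iff]
      have h1 : L i0 z ≤ f z := Finset.le_sup' (fun j => L j z) (hAJ' i0 hi0)
      have h2 : L i0 z = L i0 s + ⟪c i0, z - s⟫ := linn i0 (hAJ i0 hi0) z s
      have h3 := hAval i0 hi0
      have h4 : ⟪a i, z - s⟫ ≤ 0 := by
        rw [inner_sub_right]
        have := hPz i hri
        linarith [hai]
      have e2 : (⟪μ • a i, z - s⟫:ℝ) = μ * ⟪a i, z - s⟫ := real_inner_smul_left _ _ _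
      rw [inner_add_left, e2]
      nlinarith [mul_nonpos_of_nonneg_of_nonpos hμ h4]
    · rw [if_neg hPz]; exact le_top
  set Jc : Finset (Fin m) := J \ A with hJc
  set Zc : Finset (Fin m) := Finset.univ.filter (fun i => r i = 0 ∧ ⟪a i, s⟫ < b i) with hZc
  have hZcmem : ∀ i, i ∈ Zc ↔ (r i = 0 ∧ ⟪a i, s⟫ < b i) := by intro i; simp [hZc]
  set V : Set (EuclideanSpace ℝ (Fin n)) :=
    {x | (∀ i ∈ Jc, ∀ j ∈ A, L i x < L j x) ∧ (∀ i ∈ Zc, ⟪a i, x⟫ < b i)} with hV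
  have hVmem : ∀ x, x ∈ V ↔
      ((∀ i ∈ Jc, ∀ j ∈ A, L i x < L j x) ∧ (∀ i ∈ Zc, ⟪a i, x⟫ < b i)) := by
    intro x; rw [hV]; rfl
  have hsV : s ∈ V := by
    rw [hVmem]
    constructor
    · intro i hi j hj
      rw [hAval j hj]
      have hiJ : i ∈ J := (Finset.mem_sdiff.mp hi).1
      have h1 : L i s ≤ f s := Finset.le_sup' (fun k => L k s) hiJ
      have h2 : L i s ≠ f s := fun he =>
        (Finset.mem_sdiff.mp hi).2 (Finset.mem_filter.mpr ⟨hiJ, he⟩)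
      exact lt_of_le_of_ne h1 h2
    · intro i hi
      exact ((hZcmem i).mp hi).2
  have contL : ∀ i, Continuous (fun x : EuclideanSpace ℝ (Fin n) => L i x) := by
    intro i
    simp only [hL]
    exact ((continuous_const.inner continuous_id).sub continuous_const).div_const _
  have hVopen : IsOpen V := by
    have hVeq : V = (⋂ i ∈ Jc, ⋂ j ∈ A, {x | L i x < L j x}) ∩
        (⋂ i ∈ Zc, {x | ⟪a i, x⟫ < b i}) := by
      ext x
      simp only [hVmem, Set.mem_inter_iff, Set.mem_iInter, Set.mem_setOf_eq]
    rw [hVeq]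
    apply IsOpen.inter
    · exact isOpen_biInter_finset fun i _ => isOpen_biInter_finset fun j _ =>
        isOpen_lt (contL i) (contL j)
    · exact isOpen_biInter_finset fun i _ =>
        isOpen_lt (continuous_const.inner continuous_id) continuous_const
  have hVnhds : V ∈ 𝓝 s := hVopen.mem_nhds hsV
  have hfV : ∀ x, x ∈ V → f x = f s + A.sup' hAne (fun i => ⟪c i, x - s⟫) := by
    intro x hx
    have hAsup : A.sup' hAne (fun i => L i x) = f s + A.sup' hAne (fun i => ⟪c i, x - s⟫) := by
      rw [← sup'_const_add]
      apply Finset.sup'_congr hAne rfl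
      intro i hi
      rw [linn i (hAJ i hi) x s, hAval i hi]
    rw [← hAsup]
    obtain ⟨hx1, hx2⟩ := (hVmem x).mp hx
    apply le_antisymm
    · apply Finset.sup'_le
      intro i hi
      by_cases hiA : i ∈ A
      · exact Finset.le_sup' (fun k => L k x) hiA
      · obtain ⟨j, hj⟩ := hAne
        have := hx1 i (Finset.mem_sdiff.mpr ⟨hi, hiA⟩) j hj
        exact le_trans this.le (Finset.le_sup' (fun k => L k x) hj)
    · exact Finset.sup'_le _ _ fun i hi => Finset.le_sup' (fun k => L k x) (hAJ' i hi)
  have haff : ∀ i, r i < 0 → ∀ x (t : ℝ), L i (s + t • (x - s)) = L i s + t * (L i x - L i s) := by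
    intro i hri x t
    have h1 := linn i hri (s + t • (x - s)) s
    have h2 := linn i hri x s
    have h3 : s + t • (x - s) - s = t • (x - s) := add_sub_cancel_left s _
    rw [h1, h3, real_inner_smul_right, h2]
    ring
  have hain : ∀ i x (t : ℝ),
      (⟪a i, s + t • (x - s)⟫:ℝ) = ⟪a i, s⟫ + t * (⟪a i, x⟫ - ⟪a i, s⟫) := by
    intro i x t
    rw [inner_add_right, real_inner_smul_right, inner_sub_right]
  have hVseg : ∀ x, x ∈ V → ∀ t : ℝ, 0 ≤ t → t ≤ 1 → s + t • (x - s) ∈ V := by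
    intro x hx t ht0 ht1
    obtain ⟨hx1, hx2⟩ := (hVmem x).mp hx
    obtain ⟨hs1, hs2⟩ := (hVmem s).mp hsV
    rw [hVmem]
    constructor
    · intro i hi j hj
      rw [haff i ((hJmem i).mp (Finset.mem_sdiff.mp hi).1) x t, haff j (hAJ j hj) x t]
      exact convex_lt' (hs1 i hi j hj) (hx1 i hi j hj) ht0 ht1
    · intro i hi
      rw [hain i x t]
      have g1 := hs2 i hi
      have g2 := hx2 i hi
      rcases eq_or_lt_of_le ht0 with he | hp
      · rw [← he]; simpa using g1
      · nlinarith
  have hPseg : ∀ x, P x → ∀ t : ℝ, 0 ≤ t → t ≤ 1 → P (s + t • (x - s)) := by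
    intro x hx t ht0 ht1 i hri
    rw [hain i x t]
    exact convex_le' (hPs i hri) (hx i hri) ht0 ht1
  set M : EuclideanSpace ℝ (Fin n) → ℝ := fun x => A.sup' hAne (fun i => ⟪c i, x - s⟫) with hM
  have hhV : ∀ x, x ∈ V → P x → h x = ((f s + M x : ℝ) : EReal) := by
    intro x hx hPx
    rw [hrep x, if_pos hPx, hfV x hx]
  have hMseg : ∀ x, x ∈ V → ∀ t : ℝ, 0 ≤ t → t ≤ 1 → M (s + t • (x - s)) = t * M x := by
    intro x hx t ht0 ht1
    have e1 : ∀ i ∈ A, (⟪c i, s + t • (x - s) - s⟫:ℝ) = t * ⟪c i, x - s⟫ := by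
      intro i _
      rw [add_sub_cancel_left, real_inner_smul_right]
    rw [hM]
    calc A.sup' hAne (fun i => ⟪c i, s + t • (x - s) - s⟫)
        = A.sup' hAne (fun i => t * ⟪c i, x - s⟫) := Finset.sup'_congr hAne rfl e1
      _ = t * A.sup' hAne (fun i => ⟪c i, x - s⟫) := sup'_const_mul A hAne ht0 _
  have hsegval : ∀ x, x ∈ V → P x → ∀ t : ℝ, 0 ≤ t → t ≤ 1 →
      h (s + t • (x - s)) = ((f s + t * M x : ℝ) : EReal) := by
    intro x hx hPx t ht0 ht1
    rw [hhV _ (hVseg x hx t ht0 ht1) (hPseg x hPx t ht0 ht1), hMseg x hx t ht0 ht1]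
  have hCle : ∀ x, x ∈ V → P x → ∀ v ∈ C, (⟪v, x - s⟫:ℝ) ≤ M x := by
    intro x hx hPx v hv
    rw [hC] at hv
    have := hv x
    rw [hsval, hhV x hx hPx, ← EReal.coe_add, EReal.coe_le_coe_iff] at this
    linarith
  have hsupP : ∀ x, x ∈ V → P x → ESupport C (x - s) = ((M x : ℝ) : EReal) := by
    intro x hx hPx
    apply le_antisymm
    · apply sSup_le
      rintro e ⟨v, hv, rfl⟩
      exact EReal.coe_le_coe_iff.mpr (hCle x hx hPx v hv)
    · obtain ⟨i, hi, hieq⟩ := Finset.exists_mem_eq_sup' hAne (fun i => (⟪c i, x - s⟫:ℝ))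
      have hMx : M x = ⟪c i, x - s⟫ := hieq
      rw [hMx]
      exact le_sSup ⟨c i, cmem i hi, rfl⟩
  have htend : ∀ x ∈ V, Tendsto (fun t : ℝ => (h (s + t • (x - s)) - h s) * ((t⁻¹ : ℝ) : EReal))
      (𝓝[>] (0 : ℝ)) (𝓝 (ESupport C (x - s))) := by
    intro x hx
    by_cases hPx : P x
    · rw [hsupP x hx hPx]
      have hmem : Set.Ioo (0:ℝ) 1 ∈ 𝓝[>] (0:ℝ) :=
        Ioo_mem_nhdsGT_of_mem ⟨le_refl 0, one_pos⟩
      have hev : (fun _ : ℝ => ((M x : ℝ) : EReal)) =ᶠ[𝓝[>] (0:ℝ)]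
          (fun t : ℝ => (h (s + t • (x - s)) - h s) * ((t⁻¹ : ℝ) : EReal)) := by
        apply Filter.eventually_of_mem hmem
        intro t ht
        show ((M x : ℝ) : EReal) = (h (s + t • (x - s)) - h s) * ((t⁻¹ : ℝ) : EReal)
        rw [hsegval x hx hPx t ht.1.le ht.2.le, hsval, ← EReal.coe_sub, ← EReal.coe_mul]
        congr 1
        have htne : t ≠ 0 := ne_of_gt ht.1
        field_simp
        ring
      exact Filter.Tendsto.congr' hev tendsto_const_nhds
    · obtain ⟨i, hri, hbi⟩ : ∃ i, r i = 0 ∧ b i < ⟪a i, x⟫ := by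
        by_contra hco
        push_neg at hco
        exact hPx fun i hri => hco i hri
      have hai : (⟪a i, s⟫:ℝ) = b i := by
        rcases eq_or_lt_of_le (hPs i hri) with he | hlt
        · exact he
        · exact absurd (((hVmem x).mp hx).2 i ((hZcmem i).mpr ⟨hri, hlt⟩)) (not_lt.mpr hbi.le)
      have hd : (0:ℝ) < ⟪a i, x - s⟫ := by
        rw [inner_sub_right]; linarith
      have hnotP : ∀ t : ℝ, 0 < t → ¬ P (s + t • (x - s)) := by
        intro t ht hPt
        have := hPt i hri
        rw [hain i x t] at this
        nlinarith
      have hsuptop : ESupport C (x - s) = ⊤ := by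
        rw [ESupport, sSup_eq_top]
        intro b' hb'
        obtain ⟨β, hβ1, hβ2⟩ := EReal.lt_iff_exists_real_btwn.mp hb'
        obtain ⟨i0, hi0⟩ := hAne
        obtain ⟨μ, hμ0, hμ⟩ : ∃ μ : ℝ, 0 ≤ μ ∧ (β - ⟪c i0, x - s⟫) / ⟪a i, x - s⟫ < μ :=
          ⟨max 0 ((β - ⟪c i0, x - s⟫) / ⟪a i, x - s⟫ + 1), le_max_left _ _, by
            have := le_max_right 0 ((β - ⟪c i0, x - s⟫) / ⟪a i, x - s⟫ + 1); linarith⟩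
        refine ⟨((⟪c i0 + μ • a i, x - s⟫:ℝ) : EReal),
          ⟨c i0 + μ • a i, amem i0 hi0 i hri hai μ hμ0, rfl⟩, ?_⟩
        have e2 : (⟪μ • a i, x - s⟫:ℝ) = μ * ⟪a i, x - s⟫ := real_inner_smul_left _ _ _
        have h5 : β - ⟪c i0, x - s⟫ < μ * ⟪a i, x - s⟫ := by
          rw [div_lt_iff₀ hd] at hμ; linarith
        calc b' < (β : EReal) := hβ1
          _ ≤ ((⟪c i0 + μ • a i, x - s⟫:ℝ) : EReal) := by
            rw [inner_add_left, e2]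
            exact EReal.coe_le_coe_iff.mpr (by linarith)
      rw [hsuptop]
      have hev : (fun _ : ℝ => (⊤ : EReal)) =ᶠ[𝓝[>] (0:ℝ)]
          (fun t : ℝ => (h (s + t • (x - s)) - h s) * ((t⁻¹ : ℝ) : EReal)) := by
        apply Filter.eventually_of_mem self_mem_nhdsWithin
        intro t ht
        have ht' : (0:ℝ) < t := ht
        show (⊤:EReal) = (h (s + t • (x - s)) - h s) * ((t⁻¹ : ℝ) : EReal)
        rw [hrep (s + t • (x - s)), if_neg (hnotP t ht'), hsval, EReal.top_sub_coe]
        rw [EReal.top_mul_of_pos (by exact_mod_cast inv_pos.mpr ht')]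
      exact Filter.Tendsto.congr' hev tendsto_const_nhds
  have hsub : ∀ x ∈ V, h x ≠ ⊤ →
      ESub h x = {v | v ∈ C ∧ ∀ u ∈ C, (⟪u, x - s⟫:ℝ) ≤ ⟪v, x - s⟫} := by
    intro x hx hxtop
    have hPx : P x := by
      by_contra hPx
      rw [hrep x, if_neg hPx] at hxtop
      exact hxtop rfl
    have hhx : h x = ((f s + M x : ℝ) : EReal) := hhV x hx hPx
    obtain ⟨t0, ht0pos, hz⟩ : ∃ t0 : ℝ, 0 < t0 ∧ x + t0 • (x - s) ∈ V := by
      have hcont : Continuous (fun t : ℝ => x + t • (x - s)) :=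
        continuous_const.add (continuous_id.smul continuous_const)
      have hpre : (fun t : ℝ => x + t • (x - s)) ⁻¹' V ∈ 𝓝 (0:ℝ) := by
        apply hcont.continuousAt.preimage_mem_nhds
        have h0 : x + (0:ℝ) • (x - s) = x := by simp
        rw [h0]
        exact hVopen.mem_nhds hx
      obtain ⟨ε, hε, hball⟩ := Metric.mem_nhds_iff.mp hpre
      refine ⟨ε/2, by linarith, hball ?_⟩
      simp only [Metric.mem_ball, Real.dist_eq, sub_zero]
      rw [abs_of_pos (by linarith)]
      linarith
    set z := x + t0 • (x - s) with hzdef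
    have hzs : z - s = (1 + t0) • (x - s) := by
      rw [hzdef, add_smul, one_smul]
      abel
    have hzx : z - x = t0 • (x - s) := by
      rw [hzdef]
      abel
    have hPz : P z := by
      intro i hri
      rcases eq_or_lt_of_le (hPs i hri) with he | hlt
      · have h1 := hPx i hri
        have h2 : (⟪a i, z⟫:ℝ) = ⟪a i, x⟫ + t0 * (⟪a i, x⟫ - ⟪a i, s⟫) := by
          rw [hzdef, inner_add_right, real_inner_smul_right, inner_sub_right]
        rw [h2]
        nlinarith [mul_nonpos_of_nonneg_of_nonpos ht0pos.le
          (by linarith : (⟪a i, x⟫:ℝ) - ⟪a i, s⟫ ≤ 0)]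
      · exact (((hVmem z).mp hz).2 i ((hZcmem i).mpr ⟨hri, hlt⟩)).le
    have hMz : M z = (1 + t0) * M x := by
      have e1 : ∀ i ∈ A, (⟪c i, z - s⟫:ℝ) = (1 + t0) * ⟪c i, x - s⟫ := fun i _ => by
        rw [hzs, real_inner_smul_right]
      calc M z = A.sup' hAne (fun i => (1 + t0) * ⟪c i, x - s⟫) :=
            Finset.sup'_congr hAne rfl e1
        _ = (1 + t0) * M x := sup'_const_mul A hAne (by linarith) _
    have hhz : h z = ((f s + (1 + t0) * M x : ℝ) : EReal) := by
      rw [hhV z hz hPz, hMz]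
    ext v
    simp only [ESub, Set.mem_setOf_eq]
    constructor
    · intro hv
      have e1 : M x ≤ ⟪v, x - s⟫ := by
        have hvs := hv s
        have einn : (⟪v, s - x⟫:ℝ) = -⟪v, x - s⟫ := by
          rw [← inner_neg_right]
          congr 1
          abel
        rw [hhx, hsval, einn, ← EReal.coe_add, EReal.coe_le_coe_iff] at hvs
        linarith
      have e2 : (⟪v, x - s⟫:ℝ) ≤ M x := by
        have hvz := hv z
        have einn : (⟪v, z - x⟫:ℝ) = t0 * ⟪v, x - s⟫ := by
          rw [hzx, real_inner_smul_right]
        rw [hhx, hhz, einn, ← EReal.coe_add, EReal.coe_le_coe_iff] at hvz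
        exact (mul_le_mul_iff_right₀ ht0pos).mp (by linarith)
      have hvC : v ∈ C := by
        rw [hC]
        intro w
        have h1 := hv w
        have einn : (⟪v, w - s⟫:ℝ) = ⟪v, w - x⟫ + ⟪v, x - s⟫ := by
          rw [← inner_add_right]
          congr 1
          abel
        rw [hsval, einn]
        have hle : (((f s : ℝ)) : EReal) + ((⟪v, w - x⟫ + ⟪v, x - s⟫ : ℝ) : EReal) ≤
            h x + ((⟪v, w - x⟫ : ℝ) : EReal) := by
          rw [hhx, ← EReal.coe_add, ← EReal.coe_add, EReal.coe_le_coe_iff]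
          linarith
        exact hle.trans h1
      exact ⟨hvC, fun u hu => (hCle x hx hPx u hu).trans e1⟩
    · rintro ⟨hvC, hvmax⟩
      have e3 : (⟪v, x - s⟫:ℝ) = M x := by
        apply le_antisymm (hCle x hx hPx v hvC)
        obtain ⟨i, hi, hieq⟩ := Finset.exists_mem_eq_sup' hAne (fun i => (⟪c i, x - s⟫:ℝ))
        have hMx : M x = ⟪c i, x - s⟫ := hieq
        rw [hMx]
        exact hvmax (c i) (cmem i hi)
      intro w
      have h1 : h s + ((⟪v, w - s⟫:ℝ) : EReal) ≤ h w := by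
        rw [hC] at hvC
        exact hvC w
      have einn : (⟪v, w - s⟫:ℝ) = ⟪v, w - x⟫ + ⟪v, x - s⟫ := by
        rw [← inner_add_right]
        congr 1
        abel
      refine le_trans (le_of_eq ?_) h1
      rw [hhx, hsval, einn, e3, ← EReal.coe_add, ← EReal.coe_add]
      norm_cast
      ring
  exact ⟨V, hVnhds, htend, hsub⟩
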